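/- Let Γ be a finite simplicial graph and Λ an induced subgraph of Γ. Suppose there is an induced four-cycle σ in Γ containing two non-adjacent vertices a₁, a₂ that belong to Λ and containing a vertex b₁ that does not belong to Λ; let b₂ be the vertex of σ opposite to b₁ and set g = b₁b₂ ∈ G_Γ. Then the left cosets gⁿG_Λ for n ∈ ℤ are pairwise distinct, and the intersection ⋂_{n∈ℤ} gⁿG_Λg⁻ⁿ contains the infinite-order element a₁a₂; consequently the special subgroup G_Λ does not have finite height in G_Γ. -/

import Mathlib

open scoped Pointwise ENNReal

namespace RACGPaper

/-- The defining relations of the right-angled Coxeter group of a simple graph. -/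
def racgRels {V : Type*} (Γ : SimpleGraph V) : Set (FreeGroup V) :=
  {r | (∃ v : V, r = FreeGroup.of v * FreeGroup.of v) ∨
       (∃ v w : V, Γ.Adj v w ∧ r = (FreeGroup.of v * FreeGroup.of w) ^ 2)}

/-- The right-angled Coxeter group of a simple graph. -/
def RACG {V : Type*} (Γ : SimpleGraph V) : Type _ := PresentedGroup (racgRels Γ)

instance {V : Type*} (Γ : SimpleGraph V) : Group (RACG Γ) :=
  inferInstanceAs (Group (PresentedGroup (racgRels Γ)))

/-- The generator of `RACG Γ` corresponding to a vertex. -/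
def gen {V : Type*} (Γ : SimpleGraph V) (v : V) : RACG Γ := PresentedGroup.of v

/-- Word length with respect to the vertex generators (which are involutions). -/
noncomputable def len {V : Type*} (Γ : SimpleGraph V) (g : RACG Γ) : ℕ :=
  sInf {n | ∃ l : List V, l.length = n ∧ (l.map (gen Γ)).prod = g}

/-- The word metric on `RACG Γ`. -/
noncomputable def wdist {V : Type*} (Γ : SimpleGraph V) (g h : RACG Γ) : ℕ :=
  len Γ (g⁻¹ * h)

/-- Distance from a point to a subgroup. -/
noncomputable def distH {V : Type*} (Γ : SimpleGraph V) (H : Subgroup (RACG Γ))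
    (x : RACG Γ) : ℕ :=
  sInf {n | ∃ h ∈ H, wdist Γ x h = n}

/-- A `(K, C)`-quasi-geodesic defined on the integer interval `[a, b]`. -/
def IsQuasiGeodesic {V : Type*} (Γ : SimpleGraph V) (K C : ℝ) (a b : ℤ)
    (γ : ℤ → RACG Γ) : Prop :=
  ∀ i ∈ Set.Icc a b, ∀ j ∈ Set.Icc a b,
    |(i : ℝ) - (j : ℝ)| / K - C ≤ (wdist Γ (γ i) (γ j) : ℝ) ∧
    (wdist Γ (γ i) (γ j) : ℝ) ≤ K * |(i : ℝ) - (j : ℝ)| + C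

/-- A subgroup is strongly quasiconvex if every quasi-geodesic with endpoints on it
stays uniformly close to it. -/
def StronglyQuasiconvex {V : Type*} (Γ : SimpleGraph V) (H : Subgroup (RACG Γ)) : Prop :=
  ∀ K C : ℝ, 1 ≤ K → 0 ≤ C → ∃ M : ℝ, 0 ≤ M ∧
    ∀ (a b : ℤ) (γ : ℤ → RACG Γ), IsQuasiGeodesic Γ K C a b γ →
      γ a ∈ H → γ b ∈ H → ∀ i ∈ Set.Icc a b, (distH Γ H (γ i) : ℝ) ≤ M

/-- `H` is malnormal: `gHg⁻¹ ∩ H = {1}` for every `g ∉ H`. -/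
def Malnormal {G : Type*} [Group G] (H : Subgroup G) : Prop :=
  ∀ g : G, g ∉ H → ∀ x : G, x ∈ H → g⁻¹ * x * g ∈ H → x = 1

/-- `H` is almost malnormal: `gHg⁻¹ ∩ H` is finite for every `g ∉ H`. -/
def AlmostMalnormal {G : Type*} [Group G] (H : Subgroup G) : Prop :=
  ∀ g : G, g ∉ H → {x : G | x ∈ H ∧ g⁻¹ * x * g ∈ H}.Finite

/-- An almost malnormal collection of subgroups. -/
def AlmostMalnormalColl {G : Type*} [Group G] (𝓗 : Set (Subgroup G)) : Prop :=
  ∀ H ∈ 𝓗, ∀ H' ∈ 𝓗, ∀ g : G,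
    {x : G | x ∈ H ∧ g⁻¹ * x * g ∈ (H' : Subgroup G)}.Infinite → H = H' ∧ g ∈ H

/-- A group is virtually free if it has a free subgroup of finite index. -/
def VirtuallyFree (G : Type*) [Group G] : Prop :=
  ∃ F : Subgroup G, F.FiniteIndex ∧ IsFreeGroup F

/-- A set of vertices spans a join subgraph. -/
def IsJoin {V : Type*} (Γ : SimpleGraph V) (J : Set V) : Prop :=
  ∃ V₁ V₂ : Set V, V₁.Nonempty ∧ V₂.Nonempty ∧ Disjoint V₁ V₂ ∧ V₁ ∪ V₂ = J ∧
    ∀ v ∈ V₁, ∀ w ∈ V₂, Γ.Adj v w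

/-- The special subgroup generated by a set of vertices. -/
def special {V : Type*} (Γ : SimpleGraph V) (S₁ : Set V) : Subgroup (RACG Γ) :=
  Subgroup.closure (gen Γ '' S₁)

/-- The conjugate subgroup `gHg⁻¹`. -/
def conjSubgroup {G : Type*} [Group G] (g : G) (H : Subgroup G) : Subgroup G :=
  H.map (MulAut.conj g).toMonoidHom

/-- `x` lies in some join subgroup of `RACG Γ`. -/
def InJoinSubgroup {V : Type*} (Γ : SimpleGraph V) (x : RACG Γ) : Prop :=
  ∃ J : Set V, IsJoin Γ J ∧ x ∈ special Γ J

/-- An infinite subgroup is join-free if none of its infinite-order elements is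
conjugate into a join subgroup. -/
def JoinFree {V : Type*} (Γ : SimpleGraph V) (H : Subgroup (RACG Γ)) : Prop :=
  (H : Set (RACG Γ)).Infinite ∧
    ∀ h ∈ H, ¬ IsOfFinOrder h → ∀ g : RACG Γ, ¬ InJoinSubgroup Γ (g * h * g⁻¹)

/-- The star of a vertex: the vertex together with its neighbours. -/
def starSet {V : Type*} (Γ : SimpleGraph V) (v : V) : Set V :=
  {v} ∪ {w | Γ.Adj v w}

/-- `x` lies in some star subgroup of `RACG Γ`. -/
def InStarSubgroup {V : Type*} (Γ : SimpleGraph V) (x : RACG Γ) : Prop :=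
  ∃ v : V, x ∈ special Γ (starSet Γ v)

/-- An infinite subgroup is star-free if none of its infinite-order elements is
conjugate into a star subgroup. -/
def StarFree {V : Type*} (Γ : SimpleGraph V) (H : Subgroup (RACG Γ)) : Prop :=
  (H : Set (RACG Γ)).Infinite ∧
    ∀ h ∈ H, ¬ IsOfFinOrder h → ∀ g : RACG Γ, ¬ InStarSubgroup Γ (g * h * g⁻¹)

/-- Word length with respect to a (symmetrized) set `T` of group elements. -/
noncomputable def wlen {G : Type*} [Group G] (T : Set G) (g : G) : ℕ :=
  sInf {n | ∃ l : List G, (∀ x ∈ l, x ∈ T ∨ x⁻¹ ∈ T) ∧ l.length = n ∧ l.prod = g}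

/-- A finitely generated subgroup of `RACG Γ` is undistorted if the inclusion is a
quasi-isometric embedding with respect to word metrics. -/
def Undistorted {V : Type*} (Γ : SimpleGraph V) (H : Subgroup (RACG Γ)) : Prop :=
  ∃ T : Finset (RACG Γ), (T : Set (RACG Γ)) ⊆ (H : Set (RACG Γ)) ∧
    Subgroup.closure (T : Set (RACG Γ)) = H ∧
    ∃ K C : ℝ, 1 ≤ K ∧ 0 ≤ C ∧ ∀ h ∈ H,
      (wlen (T : Set (RACG Γ)) h : ℝ) / K - C ≤ (len Γ h : ℝ) ∧
      (len Γ h : ℝ) ≤ K * (wlen (T : Set (RACG Γ)) h : ℝ) + C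

/-- A subgroup is stable if it is undistorted and quasi-geodesics with common
endpoints on it uniformly fellow-travel. -/
def Stable {V : Type*} (Γ : SimpleGraph V) (H : Subgroup (RACG Γ)) : Prop :=
  Undistorted Γ H ∧ ∀ K C : ℝ, 1 ≤ K → 0 ≤ C → ∃ M : ℝ, 0 ≤ M ∧
    ∀ (a b a' b' : ℤ) (γ γ' : ℤ → RACG Γ),
      IsQuasiGeodesic Γ K C a b γ → IsQuasiGeodesic Γ K C a' b' γ' →
      γ a = γ' a' → γ b = γ' b' → γ a ∈ H → γ b ∈ H →
      (∀ i ∈ Set.Icc a b, ∃ j ∈ Set.Icc a' b', (wdist Γ (γ i) (γ' j) : ℝ) ≤ M) ∧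
      (∀ j ∈ Set.Icc a' b', ∃ i ∈ Set.Icc a b, (wdist Γ (γ i) (γ' j) : ℝ) ≤ M)

/-- `H` is `N`-join-busting: every join subword of a reduced word representing an
element of `H` has length at most `N`. -/
def JoinBusting {V : Type*} (Γ : SimpleGraph V) (H : Subgroup (RACG Γ)) (N : ℕ) : Prop :=
  ∀ h ∈ H, ∀ w : List V, (w.map (gen Γ)).prod = h → w.length = len Γ h →
    ∀ β : List V, β <:+: w → InJoinSubgroup Γ (β.map (gen Γ)).prod → β.length ≤ N

/-- `a b c d` is an induced four-cycle (in this cyclic order), with diagonals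
`(a, c)` and `(b, d)`. -/
def IsInducedFourCycle {V : Type*} (Γ : SimpleGraph V) (a b c d : V) : Prop :=
  a ≠ c ∧ b ≠ d ∧ ¬ Γ.Adj a c ∧ ¬ Γ.Adj b d ∧
    Γ.Adj a b ∧ Γ.Adj b c ∧ Γ.Adj c d ∧ Γ.Adj d a

/-- A set of vertices is the vertex set of an induced four-cycle. -/
def IsFourCycleSet {V : Type*} (Γ : SimpleGraph V) (Q : Set V) : Prop :=
  ∃ a b c d : V, Q = {a, b, c, d} ∧ IsInducedFourCycle Γ a b c d

/-- The four-cycle graph `Γ⁴`: vertices are induced four-cycles of `Γ`, adjacent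
when they share a pair of non-adjacent vertices. -/
def fourCycleGraph {V : Type*} (Γ : SimpleGraph V) :
    SimpleGraph {Q : Set V // IsFourCycleSet Γ Q} :=
  SimpleGraph.fromRel (fun Q Q' => ∃ u v : V, u ≠ v ∧ ¬ Γ.Adj u v ∧
    u ∈ (Q : Set V) ∩ (Q' : Set V) ∧ v ∈ (Q : Set V) ∩ (Q' : Set V))

/-- A connected component of `Γ⁴` whose support is the whole vertex set of `Γ`. -/
def FullSupportComponent {V : Type*} (Γ : SimpleGraph V)
    (C : (fourCycleGraph Γ).ConnectedComponent) : Prop :=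
  ∀ v : V, ∃ Q : {Q : Set V // IsFourCycleSet Γ Q},
    (fourCycleGraph Γ).connectedComponentMk Q = C ∧ v ∈ (Q : Set V)

/-- `Γ` is CFS: some component of `Γ⁴` has full support. -/
def CFS {V : Type*} (Γ : SimpleGraph V) : Prop :=
  ∃ C : (fourCycleGraph Γ).ConnectedComponent, FullSupportComponent Γ C

/-- Length (number of edges) of a shortest edge path from `x` to `y` in the Cayley
graph all of whose vertices are at distance at least `c` from `H`. -/
noncomputable def avoidDist {V : Type*} (Γ : SimpleGraph V) (H : Subgroup (RACG Γ))
    (c : ℝ) (x y : RACG Γ) : ℝ≥0∞ :=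
  ⨅ (l : List (RACG Γ)) (_ : l.head? = some x) (_ : l.getLast? = some y)
    (_ : l.Chain' fun a b => wdist Γ a b = 1)
    (_ : ∀ z ∈ l, c ≤ (distH Γ H z : ℝ)), ((l.length - 1 : ℕ) : ℝ≥0∞)

/-- The subgroup divergence functions `σⁿ_ρ` of `H` in `RACG Γ`. -/
noncomputable def divFun {V : Type*} (Γ : SimpleGraph V) (H : Subgroup (RACG Γ))
    (ρ : ℝ) (n : ℕ) (r : ℝ) : ℝ≥0∞ :=
  ⨅ (x : RACG Γ) (y : RACG Γ) (_ : (distH Γ H x : ℝ) = r)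
    (_ : (distH Γ H y : ℝ) = r) (_ : avoidDist Γ H r x y ≠ ⊤)
    (_ : (n : ℝ) * r ≤ (wdist Γ x y : ℝ)), avoidDist Γ H (ρ * r) x y

/-- Domination of functions: `f(x) ≤ A g(Bx) + Cx` for large `x`. -/
def FunDom (f g : ℝ → ℝ≥0∞) : Prop :=
  ∃ A B C D : ℝ, 0 < A ∧ 0 < B ∧ 0 < C ∧ 0 < D ∧
    ∀ x : ℝ, D < x → f x ≤ ENNReal.ofReal A * g (B * x) + ENNReal.ofReal (C * x)

/-- Domination of families of divergence functions. -/
def FamDom (δ δ' : ℝ → ℕ → ℝ → ℝ≥0∞) : Prop :=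
  ∃ L : ℝ, L ∈ Set.Ioc (0 : ℝ) 1 ∧ ∃ M : ℕ, 0 < M ∧
    ∀ ρ ∈ Set.Ioc (0 : ℝ) 1, ∀ n : ℕ, 2 ≤ n → FunDom (δ (L * ρ) n) (δ' ρ (M * n))

/-- A family of divergence functions is equivalent to a single function. -/
def FamEquivFun (δ : ℝ → ℕ → ℝ → ℝ≥0∞) (f : ℝ → ℝ≥0∞) : Prop :=
  FamDom δ (fun _ _ => f) ∧ FamDom (fun _ _ => f) δ

/-- Height at most `n`: any `n+1` pairwise distinct cosets give conjugates with
finite total intersection. -/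
def HeightAtMost {G : Type*} [Group G] (H : Subgroup G) (n : ℕ) : Prop :=
  ∀ f : Fin (n + 1) → G, (∀ i j, i ≠ j → (f i)⁻¹ * f j ∉ H) →
    {x : G | ∀ i, (f i)⁻¹ * x * f i ∈ H}.Finite

/-- `H` has finite height in `G`. -/
def FiniteHeight {G : Type*} [Group G] (H : Subgroup G) : Prop :=
  ∃ n : ℕ, HeightAtMost H n

end RACGPaper


section AuxRACG

open RACGPaper DihedralGroup

lemma gen_sq {V : Type*} (Γ : SimpleGraph V) (v : V) : gen Γ v * gen Γ v = 1 := by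
  have h : (FreeGroup.of v * FreeGroup.of v) ∈ Subgroup.normalClosure (racgRels Γ) :=
    Subgroup.subset_normalClosure (Or.inl ⟨v, rfl⟩)
  exact (QuotientGroup.eq_one_iff _).mpr h

lemma gen_comm {V : Type*} {Γ : SimpleGraph V} {v w : V} (h : Γ.Adj v w) :
    Commute (gen Γ v) (gen Γ w) := by
  have h1 : (gen Γ v * gen Γ w) ^ 2 = 1 := by
    have hm : ((FreeGroup.of v * FreeGroup.of w) ^ 2) ∈ Subgroup.normalClosure (racgRels Γ) :=
      Subgroup.subset_normalClosure (Or.inr ⟨v, w, h, rfl⟩)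
    exact (QuotientGroup.eq_one_iff _).mpr hm
  have hv := gen_sq Γ v
  have hw := gen_sq Γ w
  have : gen Γ v * gen Γ w = (gen Γ v * gen Γ w)⁻¹ := by
    rw [← mul_eq_one_iff_eq_inv, ← sq, h1]
  rw [mul_inv_rev, ← eq_inv_of_mul_eq_one_left hv, ← eq_inv_of_mul_eq_one_left hw] at this
  exact this

lemma exists_hom {V : Type*} (Γ : SimpleGraph V) (u w : V) (huw : u ≠ w)
    (hadj : ¬ Γ.Adj u w) :
    ∃ φ : RACG Γ →* DihedralGroup 0,
      φ (gen Γ u) = sr 0 ∧ φ (gen Γ w) = sr 1 ∧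
      ∀ v, v ≠ u → v ≠ w → φ (gen Γ v) = 1 := by
  classical
  set f : V → DihedralGroup 0 :=
    fun v => if v = u then sr 0 else if v = w then sr 1 else 1 with hf
  have hsq : ∀ v, f v * f v = 1 := by
    intro v; simp only [hf]; split_ifs <;> simp [sr_mul_self]
  have h : ∀ r ∈ racgRels Γ, FreeGroup.lift f r = 1 := by
    rintro r (⟨v, rfl⟩ | ⟨v, x, hvx, rfl⟩)
    · simpa using hsq v
    · have h1 : f v = 1 ∨ f x = 1 := by
        by_cases hvu : v = u
        · subst hvu
          have hxw : x ≠ w := fun h => hadj (h ▸ hvx)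
          right; simp [hf, hvx.ne', hxw]
        by_cases hvw : v = w
        · subst hvw
          have hxu : x ≠ u := fun h => hadj ((h ▸ hvx).symm)
          right; simp [hf, hvx.ne', hxu]
        · left; simp [hf, hvu, hvw]
      simp only [map_pow, map_mul, FreeGroup.lift_apply_of]
      rcases h1 with h1 | h1 <;> rw [h1]
      · rw [one_mul, sq]; exact hsq x
      · rw [mul_one, sq]; exact hsq v
  refine ⟨PresentedGroup.toGroup h, ?_, ?_, ?_⟩
  · show PresentedGroup.toGroup h (PresentedGroup.of u) = sr 0
    rw [PresentedGroup.toGroup.of]; simp [hf]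
  · show PresentedGroup.toGroup h (PresentedGroup.of w) = sr 1
    rw [PresentedGroup.toGroup.of]; simp [hf, huw.symm]
  · intro v hvu hvw
    show PresentedGroup.toGroup h (PresentedGroup.of v) = 1
    rw [PresentedGroup.toGroup.of]; simp [hf, hvu, hvw]

lemma r_one_zpow (k : ℤ) : (r 1 : DihedralGroup 0) ^ k = r (k : ZMod 0) := by
  have hinv : (r 1 : DihedralGroup 0)⁻¹ = r (-1) := by
    apply inv_eq_of_mul_eq_one_right
    rw [r_mul_r, one_def]; norm_num
  exact DihedralGroup.r_one_zpow k


end AuxRACG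

open DihedralGroup

open RACGPaper in
/-- for a four-cycle `a₁ b₁ a₂ b₂` with `a₁, a₂ ∈ Λ` non-adjacent and
`b₁ ∉ Λ`, the element `g = b₁ b₂` gives pairwise distinct cosets `gⁿ G_Λ`, the
infinite-order element `a₁ a₂` lies in every `gⁿ G_Λ g⁻ⁿ`, and `G_Λ` does not have
finite height. -/
theorem special_subgroup_not_finiteHeight
    {V : Type*} [Fintype V] (Γ : SimpleGraph V) (Λ : Set V) (a₁ b₁ a₂ b₂ : V)
    (hcyc : IsInducedFourCycle Γ a₁ b₁ a₂ b₂)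
    (ha₁ : a₁ ∈ Λ) (ha₂ : a₂ ∈ Λ) (hb₁ : b₁ ∉ Λ) :
    (∀ m n : ℤ, m ≠ n →
        ((gen Γ b₁ * gen Γ b₂) ^ m)⁻¹ * (gen Γ b₁ * gen Γ b₂) ^ n ∉ special Γ Λ) ∧
    ¬ IsOfFinOrder (gen Γ a₁ * gen Γ a₂) ∧
    (∀ n : ℤ, ((gen Γ b₁ * gen Γ b₂) ^ n)⁻¹ * (gen Γ a₁ * gen Γ a₂) *
        (gen Γ b₁ * gen Γ b₂) ^ n ∈ special Γ Λ) ∧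
    ¬ FiniteHeight (special Γ Λ) := by
  obtain ⟨ha12, hb12, hnadj_a, hnadj_b, hab1, hb1a2, ha2b2, hb2a1⟩ := hcyc
  set g : RACG Γ := gen Γ b₁ * gen Γ b₂ with hg
  set x : RACG Γ := gen Γ a₁ * gen Γ a₂ with hx
  have hcomm : Commute x g := by
    have c1 : Commute (gen Γ a₁) (gen Γ b₁) := gen_comm hab1
    have c2 : Commute (gen Γ a₂) (gen Γ b₁) := (gen_comm hb1a2).symm
    have c3 : Commute (gen Γ a₂) (gen Γ b₂) := gen_comm ha2b2
    have c4 : Commute (gen Γ a₁) (gen Γ b₂) := (gen_comm hb2a1).symm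
    exact (c1.mul_right c4).mul_left (c2.mul_right c3)
  have hxH : x ∈ special Γ Λ :=
    mul_mem (Subgroup.subset_closure ⟨a₁, ha₁, rfl⟩)
      (Subgroup.subset_closure ⟨a₂, ha₂, rfl⟩)
  -- Part 1
  obtain ⟨φ, hφb₁, hφb₂, hφ1⟩ := exists_hom Γ b₁ b₂ hb12 hnadj_b
  have hφg : ∀ k : ℤ, φ (g ^ k) = r (k : ZMod 0) := by
    intro k
    rw [map_zpow, hg, map_mul, hφb₁, hφb₂, sr_mul_sr]
    simpa using _root_.r_one_zpow k
  have hsub : special Γ Λ ≤ Subgroup.comap φ (Subgroup.zpowers (sr 1)) := by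
    rw [special, Subgroup.closure_le]
    rintro _ ⟨v, hv, rfl⟩
    have hvb₁ : v ≠ b₁ := fun h => hb₁ (h ▸ hv)
    by_cases hvb₂ : v = b₂
    · subst hvb₂
      simpa [Subgroup.mem_comap, hφb₂] using Subgroup.mem_zpowers _
    · simp [Subgroup.mem_comap, hφ1 v hvb₁ hvb₂, one_mem]
  have key1 : ∀ k : ℤ, k ≠ 0 → g ^ k ∉ special Γ Λ := by
    intro k hk hmem
    have hm' := hsub hmem
    rw [Subgroup.mem_comap, hφg] at hm'
    obtain ⟨m, hm⟩ := hm'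
    have hsr : (sr 1 : DihedralGroup 0) ^ m = 1 ∨ (sr 1 : DihedralGroup 0) ^ m = sr 1 := by
      have h2 : (sr 1 : DihedralGroup 0) ^ (2 : ℤ) = 1 := by
        rw [zpow_two]; exact sr_mul_self 1
      rcases Int.even_or_odd m with ⟨j, hj⟩ | ⟨j, hj⟩
      · left; rw [hj, ← two_mul, zpow_mul, h2, one_zpow]
      · right; rw [hj, zpow_add, zpow_mul, h2, one_zpow, one_mul, zpow_one]
    have hm2 : (sr 1 : DihedralGroup 0) ^ m = r (k : ZMod 0) := hm
    rcases hsr with h | h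
    · have hrk : r (k : ZMod 0) = (1 : DihedralGroup 0) := hm2.symm.trans h
      rw [one_def] at hrk
      replace hrk := DihedralGroup.r.inj hrk
      have : ((0 : ℕ) : ℤ) ∣ k := (ZMod.intCast_zmod_eq_zero_iff_dvd k 0).mp hrk
      exact hk (zero_dvd_iff.mp (by exact_mod_cast this))
    · cases hm2.symm.trans h
  have part1 : ∀ m n : ℤ, m ≠ n → (g ^ m)⁻¹ * g ^ n ∉ special Γ Λ := by
    intro m n hmn hmem
    apply key1 (n - m) (sub_ne_zero.mpr (Ne.symm hmn))
    rwa [← zpow_neg, ← zpow_add, neg_add_eq_sub] at hmem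
  -- Part 2
  have part2 : ¬ IsOfFinOrder x := by
    obtain ⟨ψ, hψa₁, hψa₂, _⟩ := exists_hom Γ a₁ a₂ ha12 hnadj_a
    intro hfin
    have h1 : IsOfFinOrder (ψ x) := ψ.isOfFinOrder hfin
    rw [hx, map_mul, hψa₁, hψa₂, sr_mul_sr] at h1
    have : orderOf (r (1 - 0 : ZMod 0) : DihedralGroup 0) = 0 := by
      simpa using orderOf_r_one (n := 0)
    exact (orderOf_eq_zero_iff.mp this) h1
  -- Part 3
  have part3 : ∀ n : ℤ, (g ^ n)⁻¹ * x * g ^ n = x := by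
    intro n
    have hc : x * g ^ n = g ^ n * x := (hcomm.zpow_right n).eq
    rw [mul_assoc, hc, ← mul_assoc, inv_mul_cancel, one_mul]
  refine ⟨part1, part2, fun n => by rw [part3 n]; exact hxH, ?_⟩
  -- Part 4
  rintro ⟨n, hn⟩
  have hd : ∀ i j : Fin (n + 1), i ≠ j →
      ((fun i : Fin (n + 1) => g ^ (i : ℕ)) i)⁻¹ *
        (fun i : Fin (n + 1) => g ^ (i : ℕ)) j ∉ special Γ Λ := by
    intro i j hij
    have hij' : ((i : ℕ) : ℤ) ≠ ((j : ℕ) : ℤ) := by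
      intro h
      exact hij (Fin.val_injective (by exact_mod_cast h))
    have := part1 _ _ hij'
    simpa [zpow_natCast] using this
  have hfin := hn (fun i => g ^ (i : ℕ)) hd
  have hinj : Function.Injective (fun k : ℤ => x ^ k) :=
    injective_zpow_iff_not_isOfFinOrder.mpr part2
  refine (Set.infinite_of_injective_forall_mem hinj ?_) hfin
  intro k i
  have hc : Commute (x ^ k) (g ^ (i : ℕ)) := (hcomm.zpow_left k).pow_right _
  show (g ^ (i : ℕ))⁻¹ * x ^ k * g ^ (i : ℕ) ∈ special Γ Λ
  rw [mul_assoc, hc.eq, ← mul_assoc, inv_mul_cancel, one_mul]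
  exact zpow_mem hxH k
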